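/- Let m ≥ 2 and let f : [0,1]^m → ℝ be a function such that the upper-scaled oscillation L_f(x) is finite for every x ∈ [0,1]^m. Then for Lebesgue-almost every y ∈ ℝ, the level set f⁻¹(y) is (m−1)-rectifiable and has σ-finite (m−1)-dimensional Hausdorff measure. -/

import Mathlib

open Set MeasureTheory Metric Filter
open scoped ENNReal NNReal Topology

/-- Lower-scaled oscillation of `f` with domain `A`:
`l_f(x) = liminf_{r→0⁺} (sup_{y ∈ A, dist y x ≤ r} dist (f y) (f x)) / r`. -/
noncomputable def lowerScaledOsc {E F : Type*} [PseudoMetricSpace E] [PseudoMetricSpace F]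
    (A : Set E) (f : E → F) (x : E) : ℝ≥0∞ :=
  Filter.liminf
    (fun r : ℝ =>
      (⨆ (y : E) (_ : y ∈ A) (_ : dist y x ≤ r), ENNReal.ofReal (dist (f y) (f x))) /
        ENNReal.ofReal r)
    (nhdsWithin 0 (Set.Ioi 0))

/-- Upper-scaled oscillation of `f` with domain `A`:
`L_f(x) = limsup_{r→0⁺} (sup_{y ∈ A, dist y x ≤ r} dist (f y) (f x)) / r`. -/
noncomputable def upperScaledOsc {E F : Type*} [PseudoMetricSpace E] [PseudoMetricSpace F]
    (A : Set E) (f : E → F) (x : E) : ℝ≥0∞ :=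
  Filter.limsup
    (fun r : ℝ =>
      (⨆ (y : E) (_ : y ∈ A) (_ : dist y x ≤ r), ENNReal.ofReal (dist (f y) (f x))) /
        ENNReal.ofReal r)
    (nhdsWithin 0 (Set.Ioi 0))

/-- `A ⊆ ℝ^m` is `s`-rectifiable: there are countably many Lipschitz maps
`g i : ℝ^s → ℝ^m` whose ranges cover `A` up to an `H^s`-null set. -/
def IsHRectifiable (s : ℕ) {m : ℕ} (A : Set (Fin m → ℝ)) : Prop :=
  ∃ g : ℕ → (Fin s → ℝ) → (Fin m → ℝ),
    (∀ i, ∃ K : ℝ≥0, LipschitzWith K (g i)) ∧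
    μH[(s : ℝ)] (A \ ⋃ i, Set.range (g i)) = 0

/-- Extract an economical cover at small scale from a Hausdorff measure bound. -/
lemma exists_good_cover {X : Type*} [EMetricSpace X] [MeasurableSpace X] [BorelSpace X]
    (d : ℝ) (S : Set X) (b δ : ℝ≥0∞) (hS : μH[d] S < b) (hδ : 0 < δ) :
    ∃ t : ℕ → Set X, (S ⊆ ⋃ n, t n) ∧ (∀ n, EMetric.diam (t n) ≤ δ) ∧
      ∑' n, (⨆ _ : (t n).Nonempty, EMetric.diam (t n) ^ d) < b := by
  have h := MeasureTheory.Measure.hausdorffMeasure_apply d S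
  have h1 : (⨅ (t : ℕ → Set X) (_ : S ⊆ ⋃ n, t n) (_ : ∀ n, EMetric.diam (t n) ≤ δ),
      ∑' n, ⨆ _ : (t n).Nonempty, EMetric.diam (t n) ^ d) < b := by
    refine lt_of_le_of_lt ?_ hS
    rw [h]
    exact le_iSup₂_of_le δ hδ le_rfl
  obtain ⟨t, ht⟩ := iInf_lt_iff.1 h1
  obtain ⟨ht1, ht2⟩ := iInf_lt_iff.1 ht
  obtain ⟨ht2, ht3⟩ := iInf_lt_iff.1 ht2
  exact ⟨t, ht1, ht2, ht3⟩

open Classical in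
lemma ec_main {M : ℕ} (d : ℝ) (hd : 1 ≤ d) (F : (Fin M → ℝ) → ℝ) (S : Set (Fin M → ℝ))
    (K r : ℝ) (hK : 0 ≤ K) (hr : 0 < r)
    (hF : ∀ x ∈ S, ∀ z ∈ S, dist z x ≤ r → |F z - F x| ≤ K * dist z x)
    (b : ℝ≥0∞) (hb : μH[d + 1] S < b) :
    ∃ v : ℝ → ℝ≥0∞, Measurable v ∧ (∀ y : ℝ, μH[d] (S ∩ F ⁻¹' {y}) ≤ v y) ∧
      ∫⁻ y, v y ≤ ENNReal.ofReal (2 * K) * b := by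
  have hd0 : (0:ℝ) < d := lt_of_lt_of_le zero_lt_one hd
  set δ : ℕ → ℝ≥0∞ := fun n => ENNReal.ofReal (min r (1 / (n + 1))) with hδdef
  have hδpos : ∀ n, 0 < δ n := fun n => by
    apply ENNReal.ofReal_pos.2
    exact lt_min hr (by positivity)
  have hδr : ∀ n, δ n ≤ ENNReal.ofReal r := fun n =>
    ENNReal.ofReal_le_ofReal (min_le_left _ _)
  have hδ0 : Filter.Tendsto δ atTop (𝓝 0) := by
    rw [show (0:ℝ≥0∞) = ENNReal.ofReal 0 by simp]
    apply ENNReal.tendsto_ofReal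
    apply squeeze_zero (fun n => le_min hr.le (by positivity)) (fun n => min_le_right _ _)
    exact tendsto_one_div_add_atTop_nhds_zero_nat
  choose t ht1 ht2 ht3 using fun n => exists_good_cover (d+1) S b (δ n) hb (hδpos n)
  set I : ℕ → ℕ → Set ℝ := fun n i =>
    if h : (S ∩ t n i).Nonempty then
      Metric.closedBall (F h.choose) (K * (EMetric.diam (t n i)).toReal) else ∅ with hIdef
  set c : ℕ → ℕ → ℝ≥0∞ := fun n i => EMetric.diam (t n i) ^ d with hcdef
  have hImeas : ∀ n i, MeasurableSet (I n i) := by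
    intro n i
    by_cases h : (S ∩ t n i).Nonempty <;> simp [hIdef, h, measurableSet_closedBall]
  set v : ℝ → ℝ≥0∞ :=
    fun y => Filter.liminf (fun n => ∑' i, Set.indicator (I n i) (fun _ => c n i) y) atTop
    with hvdef
  have hvnmeas : ∀ n, Measurable (fun y => ∑' i, Set.indicator (I n i) (fun _ => c n i) y) :=
    fun n => Measurable.ennreal_tsum fun i => (measurable_const.indicator (hImeas n i))
  have hdiamtop : ∀ n i, EMetric.diam (t n i) ≠ ⊤ :=
    fun n i => ((ht2 n i).trans_lt ENNReal.ofReal_lt_top).ne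
  refine ⟨v, Measurable.liminf hvnmeas, ?_, ?_⟩
  · intro y
    have key : μH[d] (S ∩ F ⁻¹' {y}) ≤
        Filter.liminf (fun n => ∑' i,
          EMetric.diam (if y ∈ I n i then t n i else ∅) ^ d) atTop := by
      apply MeasureTheory.Measure.hausdorffMeasure_le_liminf_tsum d _ δ hδ0
        (fun n i => if y ∈ I n i then t n i else ∅)
      · refine Filter.Eventually.of_forall fun n i => ?_
        by_cases h : y ∈ I n i <;> simp [h, ht2 n i, (hδpos n).le]
        exact ht2 n i
      · refine Filter.Eventually.of_forall fun n => ?_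
        rintro z ⟨hzS, hzy⟩
        simp only [Set.mem_preimage, Set.mem_singleton_iff] at hzy
        obtain ⟨i, hi⟩ := Set.mem_iUnion.1 (ht1 n hzS)
        have hne : (S ∩ t n i).Nonempty := ⟨z, hzS, hi⟩
        have hx0 := hne.choose_spec
        have hdistz : dist z hne.choose ≤ (EMetric.diam (t n i)).toReal := by
          rw [dist_edist]
          exact ENNReal.toReal_mono (hdiamtop n i) (EMetric.edist_le_diam_of_mem hi hx0.2)
        have hdistr : dist z hne.choose ≤ r := by
          rw [dist_edist]
          have := (EMetric.edist_le_diam_of_mem hi hx0.2).trans ((ht2 n i).trans (hδr n))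
          calc (edist z hne.choose).toReal ≤ (ENNReal.ofReal r).toReal :=
                ENNReal.toReal_mono ENNReal.ofReal_ne_top this
            _ = r := ENNReal.toReal_ofReal hr.le
        have hyI : y ∈ I n i := by
          rw [hIdef]
          simp only [hne, dif_pos]
          rw [Metric.mem_closedBall, ← hzy, Real.dist_eq]
          exact (hF hne.choose hx0.1 z hzS hdistr).trans
            (mul_le_mul_of_nonneg_left hdistz hK)
        exact Set.mem_iUnion.2 ⟨i, by simp [hyI, hi]⟩
    refine key.trans (Filter.liminf_le_liminf (Filter.Eventually.of_forall fun n => ?_))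
    apply ENNReal.tsum_le_tsum
    intro i
    by_cases h : y ∈ I n i
    · simp [h, Set.indicator_of_mem, hcdef]
    · simp [h, ENNReal.zero_rpow_of_pos hd0, EMetric.diam, Metric.ediam_empty]
  · calc (∫⁻ y, v y)
        ≤ Filter.liminf
            (fun n => ∫⁻ y, ∑' i, Set.indicator (I n i) (fun _ => c n i) y) atTop :=
          lintegral_liminf_le hvnmeas
      _ ≤ ENNReal.ofReal (2 * K) * b := by
        have hbd : ∀ n, (∫⁻ y, ∑' i, Set.indicator (I n i) (fun _ => c n i) y) ≤
            ENNReal.ofReal (2 * K) * b := by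
          intro n
          rw [lintegral_tsum (fun i => (measurable_const.indicator (hImeas n i)).aemeasurable)]
          have hterm : ∀ i, (∫⁻ y, Set.indicator (I n i) (fun _ => c n i) y) ≤
              ENNReal.ofReal (2 * K) * (⨆ _ : (t n i).Nonempty, EMetric.diam (t n i) ^ (d+1)) := by
            intro i
            rw [lintegral_indicator_const (hImeas n i)]
            by_cases h : (S ∩ t n i).Nonempty
            · have htne : (t n i).Nonempty := ⟨h.choose, h.choose_spec.2⟩
              rw [hIdef]
              simp only [h, dif_pos, Real.volume_closedBall, iSup_pos htne]
              set D := EMetric.diam (t n i) with hD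
              rcases eq_or_ne D 0 with hD0 | hD0
              · rw [hcdef]; simp [← hD, hD0, ENNReal.zero_rpow_of_pos hd0]
              · have : ENNReal.ofReal (2 * (K * D.toReal)) = ENNReal.ofReal (2*K) * D := by
                  rw [show 2 * (K * D.toReal) = (2*K) * D.toReal by ring,
                    ENNReal.ofReal_mul (by positivity), ENNReal.ofReal_toReal (hdiamtop n i)]
                rw [hcdef]
                simp only [← hD, this]
                rw [ENNReal.rpow_add d 1 hD0 (hdiamtop n i), ENNReal.rpow_one]
                ring_nf
                exact le_rfl
            · rw [hIdef]; simp [h]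
          refine (ENNReal.tsum_le_tsum hterm).trans ?_
          rw [ENNReal.tsum_mul_left]
          exact mul_le_mul_right (ht3 n).le _
        refine (Filter.liminf_le_liminf (Filter.Eventually.of_forall hbd)).trans ?_
        simp [Filter.liminf_const]
lemma dist_insertNth_le {M : ℕ} (j : Fin (M+1)) (a b : ℝ) (u v : Fin M → ℝ) :
    dist (j.insertNth (α := fun _ => ℝ) a u) (j.insertNth (α := fun _ => ℝ) b v) ≤
      max (dist a b) (dist u v) := by
  apply dist_pi_le_iff (le_max_of_le_left dist_nonneg) |>.2
  intro i
  rcases eq_or_ne i j with rfl | hij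
  · simp only [Fin.insertNth_apply_same]
    exact le_max_left _ _
  · obtain ⟨i', rfl⟩ := Fin.exists_succAbove_eq hij
    simp only [Fin.insertNth_apply_succAbove]
    exact le_max_of_le_right (dist_le_pi_dist u v i')

lemma dist_removeNth {M : ℕ} (j : Fin (M+1)) (a b : Fin (M+1) → ℝ) (h : a j = b j) :
    dist a b = dist (j.removeNth a) (j.removeNth b) := by
  apply le_antisymm
  · apply dist_pi_le_iff dist_nonneg |>.2
    intro i
    rcases eq_or_ne i j with rfl | hij
    · simp only [h, dist_self]
      exact dist_nonneg
    · obtain ⟨i', rfl⟩ := Fin.exists_succAbove_eq hij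
      exact dist_le_pi_dist (j.removeNth a) (j.removeNth b) i'
  · apply dist_pi_le_iff dist_nonneg |>.2
    intro i'
    exact dist_le_pi_dist a b (j.succAbove i')

lemma graph_cover {M : ℕ} (j : Fin (M+1)) (S : Set (Fin (M+1) → ℝ)) (L : ℝ≥0)
    (hkey : ∀ x ∈ S, ∀ z ∈ S, |z j - x j| ≤ L * dist (j.removeNth z) (j.removeNth x)) :
    ∃ g : (Fin M → ℝ) → (Fin (M+1) → ℝ), (∃ K : ℝ≥0, LipschitzWith K g) ∧ S ⊆ Set.range g := by
  classical
  set T := Fin.removeNth j '' S with hT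
  set φ := Function.invFunOn (Fin.removeNth j) S with hφdef
  have hφ : ∀ u ∈ T, φ u ∈ S ∧ j.removeNth (φ u) = u := by
    intro u hu
    obtain ⟨x, hx, hxu⟩ := hu
    exact ⟨Function.invFunOn_mem ⟨x, hx, hxu⟩, Function.invFunOn_eq ⟨x, hx, hxu⟩⟩
  set h : (Fin M → ℝ) → ℝ := fun u => φ u j with hhdef
  have hlip : LipschitzOnWith L h T := by
    rw [lipschitzOnWith_iff_dist_le_mul]
    intro u hu v hv
    obtain ⟨huS, hueq⟩ := hφ u hu
    obtain ⟨hvS, hveq⟩ := hφ v hv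
    have := hkey (φ v) hvS (φ u) huS
    rw [hueq, hveq] at this
    rw [Real.dist_eq]
    exact this
  obtain ⟨H, hH, hHeq⟩ := hlip.extend_real
  refine ⟨fun u => j.insertNth (H u) u, ⟨max L 1, ?_⟩, ?_⟩
  · apply LipschitzWith.of_dist_le_mul
    intro u v
    refine (dist_insertNth_le j (H u) (H v) u v).trans ?_
    rw [NNReal.coe_max, NNReal.coe_one]
    apply max_le
    · exact (hH.dist_le_mul u v).trans
        (mul_le_mul_of_nonneg_right (le_max_left _ _) dist_nonneg)
    · nlinarith [dist_nonneg (x := u) (y := v), le_max_right (L:ℝ) 1]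
  · intro x hx
    refine ⟨j.removeNth x, ?_⟩
    have hmem : j.removeNth x ∈ T := Set.mem_image_of_mem _ hx
    obtain ⟨hφS, hφeq⟩ := hφ _ hmem
    have h1 : H (j.removeNth x) = x j := by
      rw [← hHeq hmem, hhdef]
      have := hkey (φ (j.removeNth x)) hφS x hx
      rw [hφeq, dist_self, mul_zero, abs_nonpos_iff, sub_eq_zero] at this
      exact this.symm
    show j.insertNth (H (j.removeNth x)) (j.removeNth x) = x
    rw [h1, Fin.insertNth_self_removeNth]
lemma update_eq_add_single {M : ℕ} (x : Fin M → ℝ) (j : Fin M) (a : ℝ) :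
    Function.update x j a = x + (a - x j) • (Pi.single j 1 : Fin M → ℝ) := by
  funext i
  rcases eq_or_ne i j with rfl | hij
  · simp
  · simp [Function.update_apply, hij, Pi.single_apply, hij]

lemma good_of_deriv {M : ℕ} (F : (Fin M → ℝ) → ℝ) (x : Fin M → ℝ)
    (hdiff : DifferentiableAt ℝ F x) (hD : fderiv ℝ F x ≠ 0) :
    ∃ (j : Fin M) (k : ℕ), ∀ a : ℝ, |a - x j| ≤ 1/(k+1) →
      |a - x j|/(k+1) ≤ |F (Function.update x j a) - F x| := by
  classical
  set D := fderiv ℝ F x with hDdef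
  have hj : ∃ j : Fin M, D ((Pi.single j 1 : Fin M → ℝ)) ≠ 0 := by
    by_contra hcon
    push_neg at hcon
    apply hD
    ext v
    have hv : v = ∑ i, v i • (Pi.single i 1 : Fin M → ℝ) := by
      funext i
      simp [Pi.single_apply, Finset.sum_ite_eq']
    rw [ContinuousLinearMap.zero_apply, hv, map_sum]
    simp [hcon]
  obtain ⟨j, hj⟩ := hj
  set c := D ((Pi.single j 1 : Fin M → ℝ)) with hcdef
  have h₁ : HasDerivAt (fun t : ℝ => x + t • (Pi.single j 1 : Fin M → ℝ)) (Pi.single j 1) 0 := by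
    simpa using ((hasDerivAt_id (0:ℝ)).smul_const ((Pi.single j 1 : Fin M → ℝ))).const_add x
  have h₂ : HasDerivAt (fun t : ℝ => F (x + t • (Pi.single j 1 : Fin M → ℝ))) c 0 := by
    have hf : HasFDerivAt F (fderiv ℝ F x)
        ((fun t : ℝ => x + t • (Pi.single j 1 : Fin M → ℝ)) 0) := by
      simpa using hdiff.hasFDerivAt
    exact hf.comp_hasDerivAt 0 h₁
  have hlo := (hasDerivAt_iff_isLittleO.1 h₂).bound (c := |c|/2) (by positivity)
  rw [Metric.eventually_nhds_iff] at hlo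
  obtain ⟨ρ, hρ, hle⟩ := hlo
  obtain ⟨k, hk⟩ := exists_nat_gt (max (2/|c|) (1/ρ))
  have hk1 : 1/(k+1:ℝ) < ρ := by
    rw [div_lt_iff₀ (by positivity)]
    have := (le_max_right (2/|c|) (1/ρ)).trans_lt hk
    rw [div_lt_iff₀ hρ] at this
    nlinarith
  have hk2 : 1/(k+1:ℝ) ≤ |c|/2 := by
    rw [div_le_div_iff₀ (by positivity) (by norm_num)]
    have := (le_max_left (2/|c|) (1/ρ)).trans_lt hk
    rw [div_lt_iff₀ (abs_pos.2 hj)] at this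
    nlinarith
  refine ⟨j, k, fun a ha => ?_⟩
  set t := a - x j with htdef
  have hdist : dist t 0 < ρ := by
    rw [Real.dist_eq, sub_zero]
    exact lt_of_le_of_lt ha hk1
  have hb := hle hdist
  simp only [sub_zero, smul_eq_mul, Real.norm_eq_abs] at hb
  have hupdate : Function.update x j a = x + t • (Pi.single j 1 : Fin M → ℝ) := update_eq_add_single x j a
  rw [hupdate]
  have hFx : F (x + (0:ℝ) • (Pi.single j 1 : Fin M → ℝ)) = F x := by simp
  rw [hFx] at hb
  have habs : |t| * |c| - |c|/2 * |t| ≤ |F (x + t • (Pi.single j 1 : Fin M → ℝ)) - F x| := by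
    have := abs_sub_abs_le_abs_sub (t * c) (t * c - (F (x + t • (Pi.single j 1 : Fin M → ℝ)) - F x))
    rw [abs_mul] at this
    have h3 : |t * c - (F (x + t • (Pi.single j 1 : Fin M → ℝ)) - F x)| ≤ |c|/2 * |t| := by
      rw [show t * c - (F (x + t • (Pi.single j 1 : Fin M → ℝ)) - F x)
        = -(F (x + t • (Pi.single j 1 : Fin M → ℝ)) - F x - t * c) by ring, abs_neg]
      exact hb
    rw [show t * c - (t * c - (F (x + t • (Pi.single j 1 : Fin M → ℝ)) - F x))
      = F (x + t • (Pi.single j 1 : Fin M → ℝ)) - F x by ring] at this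
    linarith
  calc |t|/(k+1) = |t| * (1/(k+1)) := by ring
    _ ≤ |t| * (|c|/2) := by
        apply mul_le_mul_of_nonneg_left hk2 (abs_nonneg t)
    _ = |t| * |c| - |c|/2 * |t| := by ring
    _ ≤ |F (x + t • (Pi.single j 1 : Fin M → ℝ)) - F x| := habs

lemma crit_mem {M : ℕ} (F : (Fin M → ℝ) → ℝ) (x : Fin M → ℝ)
    (hdiff : DifferentiableAt ℝ F x) (hD : fderiv ℝ F x = 0) (e : ℕ) :
    ∃ p : ℕ, ∀ z, dist z x ≤ 1/(p+1) → |F z - F x| ≤ (1/(e+1)) * dist z x := by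
  have hlo := (hdiff.hasFDerivAt.isLittleO).bound
    (c := 1/(e+1)) (by positivity)
  rw [hD] at hlo
  simp only [ContinuousLinearMap.zero_apply, sub_zero, Real.norm_eq_abs] at hlo
  rw [Metric.eventually_nhds_iff] at hlo
  obtain ⟨ρ, hρ, hle⟩ := hlo
  obtain ⟨p, hp⟩ := exists_nat_gt (1/ρ)
  refine ⟨p, fun z hz => ?_⟩
  have hp1 : 1/(p+1:ℝ) < ρ := by
    rw [div_lt_iff₀ (by positivity)]
    rw [div_lt_iff₀ hρ] at hp
    nlinarith
  have hdz : dist z x < ρ := lt_of_le_of_lt hz hp1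
  have := hle (show dist z x < ρ from hdz)
  rw [← dist_eq_norm] at this
  exact this
def dyCube {M : ℕ} (N : ℕ) (q : Fin M → ℤ) : Set (Fin M → ℝ) :=
  {x | ∀ i, (q i : ℝ)/(2*(N+1)) ≤ x i ∧ x i ≤ ((q i : ℝ)+1)/(2*(N+1))}

lemma mem_dyCube {M : ℕ} (N : ℕ) (x : Fin M → ℝ) :
    x ∈ dyCube N (fun i => ⌊2*(N+1)*x i⌋) := by
  intro i
  have h1 : (⌊2*((N:ℝ)+1)*x i⌋ : ℝ) ≤ 2*((N:ℝ)+1)*x i := Int.floor_le _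
  have h2 : 2*((N:ℝ)+1)*x i < (⌊2*((N:ℝ)+1)*x i⌋ : ℝ) + 1 := Int.lt_floor_add_one _
  have hpos : (0:ℝ) < 2*((N:ℝ)+1) := by positivity
  constructor
  · rw [div_le_iff₀ hpos]
    push_cast
    nlinarith
  · rw [le_div_iff₀ hpos]
    push_cast
    nlinarith

lemma dyCube_dist {M : ℕ} (N : ℕ) (q : Fin M → ℤ) {x z : Fin M → ℝ}
    (hx : x ∈ dyCube N q) (hz : z ∈ dyCube N q) : dist x z ≤ 1/(2*(N+1)) := by
  apply dist_pi_le_iff (by positivity) |>.2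
  intro i
  obtain ⟨h1, h2⟩ := hx i
  obtain ⟨h3, h4⟩ := hz i
  have key : ((q i:ℝ)+1)/(2*((N:ℝ)+1)) - (q i:ℝ)/(2*((N:ℝ)+1)) = 1/(2*((N:ℝ)+1)) := by
    rw [div_sub_div_same]; ring_nf
  rw [Real.dist_eq, abs_sub_le_iff]
  constructor <;> linarith
lemma osc_pointwise {m : ℕ} (f : (Fin m → ℝ) → ℝ) (x : Fin m → ℝ)
    (h : upperScaledOsc (Set.Icc (0 : Fin m → ℝ) 1) f x < ⊤) :
    ∃ n : ℕ, ∀ z ∈ Set.Icc (0 : Fin m → ℝ) 1, dist z x ≤ 1/(n+1) →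
      |f z - f x| ≤ (n+1) * dist z x := by
  obtain ⟨n₀, hn₀⟩ := ENNReal.exists_nat_gt h.ne
  have hev : ∀ᶠ r in 𝓝[>] (0:ℝ),
      (⨆ (y) (_ : y ∈ Set.Icc (0 : Fin m → ℝ) 1) (_ : dist y x ≤ r),
        ENNReal.ofReal (dist (f y) (f x))) / ENNReal.ofReal r < n₀ :=
    Filter.eventually_lt_of_limsup_lt hn₀
  rw [eventually_nhdsWithin_iff] at hev
  rw [Metric.eventually_nhds_iff] at hev
  obtain ⟨ε, hε, hball⟩ := hev
  obtain ⟨n, hn⟩ := exists_nat_gt (max (1/ε) n₀)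
  have hn₀n : (n₀ : ℝ) ≤ n+1 := by
    have := (le_max_right (1/ε) (n₀:ℝ)).trans_lt hn
    linarith
  refine ⟨n, fun z hz hd => ?_⟩
  rcases eq_or_lt_of_le (dist_nonneg (x := z) (y := x)) with hd0 | hd0
  · have : z = x := by rwa [eq_comm, dist_eq_zero] at hd0
    simp [this, ← hd0]
  · have hdε : dist (dist z x) 0 < ε := by
      rw [Real.dist_eq, sub_zero, abs_of_pos hd0]
      have h1 : 1/(n+1 : ℝ) < ε := by
        rw [div_lt_iff₀ (by positivity)]
        have := (le_max_left (1/ε) (n₀:ℝ)).trans_lt hn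
        rw [div_lt_iff₀ hε] at this
        nlinarith
      linarith
    have hG := hball hdε hd0
    rw [ENNReal.div_lt_iff (Or.inl (by simpa using hd0.ne'))
      (Or.inl ENNReal.ofReal_ne_top)] at hG
    have hle : ENNReal.ofReal (dist (f z) (f x)) ≤
        ⨆ (y) (_ : y ∈ Set.Icc (0 : Fin m → ℝ) 1) (_ : dist y x ≤ dist z x),
          ENNReal.ofReal (dist (f y) (f x)) := by
      apply le_iSup_of_le z
      apply le_iSup_of_le hz
      exact le_iSup_of_le le_rfl le_rfl
    have hlt := hle.trans_lt hG
    rw [show ((n₀:ℝ≥0∞) * ENNReal.ofReal (dist z x)) = ENNReal.ofReal (n₀ * dist z x) by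
        rw [ENNReal.ofReal_mul (by positivity)]; simp] at hlt
    rw [ENNReal.ofReal_lt_ofReal_iff_of_nonneg dist_nonneg] at hlt
    rw [← Real.dist_eq]
    nlinarith [dist_nonneg (x := z) (y := x)]

lemma good_piece_cover {M : ℕ} (F : (Fin (M+1) → ℝ) → ℝ) (n k : ℕ)
    (hF : LipschitzWith ((n:ℝ≥0)+1) F) (j : Fin (M+1)) (q' : Fin (M+1) → ℤ) (y : ℝ) :
    ∃ g : (Fin M → ℝ) → (Fin (M+1) → ℝ), (∃ K : ℝ≥0, LipschitzWith K g) ∧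
      ({x | ∀ a : ℝ, |a - x j| ≤ 1/(k+1) →
          |a - x j|/(k+1) ≤ |F (Function.update x j a) - F x|}
        ∩ dyCube k q' ∩ F ⁻¹' {y}) ⊆ Set.range g := by
  apply graph_cover j _ (((k:ℝ≥0)+1)*((n:ℝ≥0)+1))
  rintro x ⟨⟨hxg, hxq⟩, hxy⟩ z ⟨⟨hzg, hzq⟩, hzy⟩
  simp only [Set.mem_preimage, Set.mem_singleton_iff] at hxy hzy
  simp only [Set.mem_setOf_eq] at hxg hzg
  have hk1 : (0:ℝ) < (k:ℝ)+1 := by positivity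
  have hdzx : |z j - x j| ≤ 1/((k:ℝ)+1) := by
    calc |z j - x j| = dist (z j) (x j) := (Real.dist_eq _ _).symm
      _ ≤ dist z x := dist_le_pi_dist z x j
      _ ≤ 1/(2*((k:ℝ)+1)) := dyCube_dist k q' hzq hxq
      _ ≤ 1/((k:ℝ)+1) := by
          apply one_div_le_one_div_of_le hk1
          linarith
  have hgx := hxg (z j) hdzx
  have hupdate_rm : Fin.removeNth j (Function.update x j (z j)) = Fin.removeNth j x := by
    funext i'
    simp [Fin.removeNth, Function.update_apply, Fin.succAbove_ne j i']
  have hdist_eq : dist (Function.update x j (z j)) z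
      = dist (Fin.removeNth j z) (Fin.removeNth j x) := by
    rw [dist_removeNth j _ _ (by simp), hupdate_rm, dist_comm]
  have hFb : |F (Function.update x j (z j)) - F x|
      ≤ ((n:ℝ)+1) * dist (Fin.removeNth j z) (Fin.removeNth j x) := by
    have hxz : F x = F z := by rw [hxy, hzy]
    calc |F (Function.update x j (z j)) - F x|
        = dist (F (Function.update x j (z j))) (F z) := by rw [hxz, Real.dist_eq]
      _ ≤ (((n:ℝ≥0)+1) : ℝ) * dist (Function.update x j (z j)) z := hF.dist_le_mul _ _
      _ = ((n:ℝ)+1) * dist (Fin.removeNth j z) (Fin.removeNth j x) := by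
          rw [hdist_eq]; push_cast; ring
  have := hgx.trans hFb
  rw [div_le_iff₀ hk1] at this
  calc |z j - x j| ≤ ((n:ℝ)+1) * dist (Fin.removeNth j z) (Fin.removeNth j x) * ((k:ℝ)+1) :=
        this
    _ = (((k:ℝ≥0)+1)*((n:ℝ≥0)+1) : ℝ≥0) * dist (Fin.removeNth j z) (Fin.removeNth j x) := by
        push_cast; ring


theorem stmt11 (m : ℕ) (hm : 2 ≤ m) (f : (Fin m → ℝ) → ℝ)
    (hL : ∀ x ∈ Set.Icc (0 : Fin m → ℝ) 1, upperScaledOsc (Set.Icc 0 1) f x < ⊤) :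
    ∀ᵐ y ∂(volume : Measure ℝ),
      IsHRectifiable (m - 1) (Set.Icc (0 : Fin m → ℝ) 1 ∩ f ⁻¹' {y}) ∧
      ∃ s : ℕ → Set (Fin m → ℝ),
        (Set.Icc (0 : Fin m → ℝ) 1 ∩ f ⁻¹' {y} ⊆ ⋃ n, s n) ∧
        (∀ n, μH[(m : ℝ) - 1] (s n) < ⊤) := by
  classical
  obtain ⟨M, rfl⟩ : ∃ M, m = M + 1 := ⟨m - 1, by omega⟩
  have hM : 1 ≤ M := by omega
  have hd : (1:ℝ) ≤ (M:ℝ) := by exact_mod_cast hM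
  set Icc1 : Set (Fin (M+1) → ℝ) := Set.Icc 0 1 with hIcc1
  -- pointwise Lipschitz pieces
  set A : ℕ → Set (Fin (M+1) → ℝ) := fun n =>
    {x | x ∈ Icc1 ∧ ∀ z ∈ Icc1, dist z x ≤ 1/(n+1) → |f z - f x| ≤ (n+1) * dist z x} with hA
  have hAmem : ∀ x ∈ Icc1, ∃ n, x ∈ A n := by
    intro x hx
    obtain ⟨n, hn⟩ := osc_pointwise f x (hL x hx)
    exact ⟨n, hx, hn⟩
  set P : ℕ × (Fin (M+1) → ℤ) → Set (Fin (M+1) → ℝ) :=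
    fun i => A i.1 ∩ dyCube i.1 i.2 with hP
  have hPIcc : ∀ i, P i ⊆ Icc1 := fun i x hx => hx.1.1
  have hPlip : ∀ i, LipschitzOnWith ((i.1:ℝ≥0)+1) f (P i) := by
    intro i
    rw [lipschitzOnWith_iff_dist_le_mul]
    rintro x ⟨⟨hxI, hxA⟩, hxq⟩ z ⟨⟨hzI, _⟩, hzq⟩
    have hdist : dist z x ≤ 1/((i.1:ℝ)+1) := by
      refine (dyCube_dist i.1 i.2 hzq hxq).trans ?_
      apply one_div_le_one_div_of_le (by positivity)
      linarith
    have := hxA z hzI hdist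
    rw [Real.dist_eq, abs_sub_comm]
    calc |f z - f x| ≤ ((i.1:ℝ)+1) * dist z x := this
      _ = (((i.1:ℝ≥0)+1 : ℝ≥0) : ℝ) * dist x z := by rw [dist_comm]; push_cast; ring
  choose F hFlip hFeq using fun i => (hPlip i).extend_real
  -- Hausdorff measure = volume in top dimension
  have hHvol : (μH[(M:ℝ)+1] : Measure (Fin (M+1) → ℝ)) = volume := by
    have : ((M:ℝ)+1) = ((Fintype.card (Fin (M+1)) : ℕ) : ℝ) := by simp
    rw [this]
    exact hausdorffMeasure_pi_real
  have hIccvol : μH[(M:ℝ)+1] Icc1 ≤ 1 := by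
    rw [hHvol, hIcc1]
    rw [Real.volume_Icc_pi]
    simp
  have hsubIcc : ∀ S : Set (Fin (M+1) → ℝ), S ⊆ Icc1 → μH[(M:ℝ)+1] S < 2 := by
    intro S hS
    calc μH[(M:ℝ)+1] S ≤ μH[(M:ℝ)+1] Icc1 := measure_mono hS
      _ ≤ 1 := hIccvol
      _ < 2 := by norm_num
  have hFlip' : ∀ i, ∀ x ∈ (Set.univ : Set (Fin (M+1) → ℝ)), ∀ z,
      |F i z - F i x| ≤ ((i.1:ℝ)+1) * dist z x := by
    intro i x _ z
    rw [← Real.dist_eq]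
    calc dist (F i z) (F i x) ≤ (((i.1:ℝ≥0)+1 : ℝ≥0) : ℝ) * dist z x :=
          (hFlip i).dist_le_mul _ _
      _ = ((i.1:ℝ)+1) * dist z x := by push_cast; ring
  -- Eilenberg majorants for the pieces (σ-finiteness)
  have hv1 : ∀ i, ∃ v : ℝ → ℝ≥0∞, Measurable v ∧
      (∀ y, μH[(M:ℝ)] (P i ∩ F i ⁻¹' {y}) ≤ v y) ∧
      (∫⁻ y, v y) ≤ ENNReal.ofReal (2*((i.1:ℝ)+1)) * 2 := by
    intro i
    apply ec_main (M:ℝ) hd (F i) (P i) ((i.1:ℝ)+1) 1 (by positivity) one_pos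
    · intro x hx z hz _
      exact hFlip' i x trivial z
    · exact hsubIcc _ (hPIcc i)
  choose v1 hv1m hv1b hv1i using hv1
  have ae1 : ∀ᵐ y ∂(volume : Measure ℝ), ∀ i, v1 i y < ⊤ := by
    rw [ae_all_iff]
    intro i
    exact ae_lt_top (hv1m i)
      (lt_of_le_of_lt (hv1i i) (by
        apply ENNReal.mul_lt_top ENNReal.ofReal_lt_top (by norm_num)) ).ne
  -- non-differentiability sets are H^M-null on a.e. level set
  have aeZ : ∀ᵐ y ∂(volume : Measure ℝ), ∀ i,
      μH[(M:ℝ)] (({x | ¬ DifferentiableAt ℝ (F i) x} ∩ Icc1) ∩ F i ⁻¹' {y}) = 0 := by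
    rw [ae_all_iff]
    intro i
    set Z := {x | ¬ DifferentiableAt ℝ (F i) x} ∩ Icc1 with hZ
    have hZ0 : μH[(M:ℝ)+1] Z = 0 := by
      rw [hHvol]
      refine measure_mono_null Set.inter_subset_left ?_
      exact ae_iff.1 ((hFlip i).ae_differentiableAt (μ := volume))
    have hw : ∀ l : ℕ, ∃ w : ℝ → ℝ≥0∞, Measurable w ∧
        (∀ y, μH[(M:ℝ)] (Z ∩ F i ⁻¹' {y}) ≤ w y) ∧
        (∫⁻ y, w y) ≤ ENNReal.ofReal (2*((i.1:ℝ)+1)) * ((l:ℝ≥0∞))⁻¹ := by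
      intro l
      apply ec_main (M:ℝ) hd (F i) Z ((i.1:ℝ)+1) 1 (by positivity) one_pos
      · intro x hx z hz _
        exact hFlip' i x trivial z
      · rw [hZ0]
        exact ENNReal.inv_pos.2 (ENNReal.natCast_ne_top l)
    choose w hwm hwb hwi using hw
    set W : ℝ → ℝ≥0∞ := fun y => ⨅ l, w l y with hW
    have hWm : Measurable W := Measurable.iInf hwm
    have hWI : (∫⁻ y, W y) = 0 := by
      refine le_antisymm ?_ (zero_le)
      have htend : Filter.Tendsto
          (fun l : ℕ => ENNReal.ofReal (2*((i.1:ℝ)+1)) * ((l:ℝ≥0∞))⁻¹) atTop (𝓝 0) := by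
        have := ENNReal.Tendsto.const_mul (a := ENNReal.ofReal (2*((i.1:ℝ)+1)))
          ENNReal.tendsto_inv_nat_nhds_zero (Or.inr ENNReal.ofReal_ne_top)
        simpa using this
      refine ge_of_tendsto htend (Filter.Eventually.of_forall fun l => ?_)
      calc (∫⁻ y, W y) ≤ ∫⁻ y, w l y := lintegral_mono fun y => iInf_le _ _
        _ ≤ _ := hwi l
    have hW0 := (lintegral_eq_zero_iff hWm).1 hWI
    filter_upwards [hW0] with y hy
    refine le_antisymm ?_ (zero_le)
    calc μH[(M:ℝ)] (Z ∩ F i ⁻¹' {y}) ≤ W y := le_iInf fun l => hwb l y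
      _ = 0 := hy
  -- critical sets are H^M-null on a.e. level set
  have aeC : ∀ᵐ y ∂(volume : Measure ℝ), ∀ i,
      μH[(M:ℝ)] (({x | DifferentiableAt ℝ (F i) x ∧ fderiv ℝ (F i) x = 0} ∩ Icc1)
        ∩ F i ⁻¹' {y}) = 0 := by
    rw [ae_all_iff]
    intro i
    set Cr := {x | DifferentiableAt ℝ (F i) x ∧ fderiv ℝ (F i) x = 0} ∩ Icc1 with hCr
    set Cs : ℕ → ℕ → Set (Fin (M+1) → ℝ) := fun e p =>
      {x | x ∈ Icc1 ∧ ∀ z, dist z x ≤ 1/(p+1) →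
        |F i z - F i x| ≤ (1/(e+1)) * dist z x} with hCs
    have hCsub : ∀ e, Cr ⊆ ⋃ p, Cs e p := by
      rintro e x ⟨⟨hdiff, hD0⟩, hxI⟩
      obtain ⟨p, hp⟩ := crit_mem (F i) x hdiff hD0 e
      exact Set.mem_iUnion.2 ⟨p, hxI, hp⟩
    have hCmono : ∀ e, Monotone (Cs e) := by
      intro e p p' hpp' x hx
      refine ⟨hx.1, fun z hz => hx.2 z (hz.trans ?_)⟩
      apply one_div_le_one_div_of_le (by positivity)
      have : (p:ℝ) ≤ (p':ℝ) := by exact_mod_cast hpp'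
      linarith
    have hv2 : ∀ e p : ℕ, ∃ v : ℝ → ℝ≥0∞, Measurable v ∧
        (∀ y, μH[(M:ℝ)] (Cs e p ∩ F i ⁻¹' {y}) ≤ v y) ∧
        (∫⁻ y, v y) ≤ ENNReal.ofReal (2*(1/((e:ℝ)+1))) * 2 := by
      intro e p
      apply ec_main (M:ℝ) hd (F i) (Cs e p) (1/((e:ℝ)+1)) (1/((p:ℝ)+1))
        (by positivity) (by positivity)
      · intro x hx z hz hdist
        exact hx.2 z hdist
      · exact hsubIcc _ (fun x hx => hx.1)
    choose v2 hv2m hv2b hv2i using hv2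
    have key : (volume : Measure ℝ) {y | μH[(M:ℝ)] (Cr ∩ F i ⁻¹' {y}) ≠ 0} = 0 := by
      have hsubT : {y | μH[(M:ℝ)] (Cr ∩ F i ⁻¹' {y}) ≠ 0} ⊆ ⋃ l : ℕ,
          {y | ((l:ℝ≥0∞)+1)⁻¹ < μH[(M:ℝ)] (Cr ∩ F i ⁻¹' {y})} := by
        intro y hy
        obtain ⟨l, hl⟩ := ENNReal.exists_inv_nat_lt hy
        refine Set.mem_iUnion.2 ⟨l, ?_⟩
        exact lt_of_le_of_lt (ENNReal.inv_le_inv.2 (by simp)) hl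
      refine measure_mono_null hsubT ?_
      · refine measure_iUnion_null fun l => ?_
        set a : ℝ≥0∞ := ((l:ℝ≥0∞)+1)⁻¹ with ha
        have ha0 : a ≠ 0 := by simp [ha]
        have hat : a ≠ ⊤ := by
          rw [ha]
          simp [ENNReal.inv_ne_top]
        have hsub : ∀ e : ℕ, {y | a < μH[(M:ℝ)] (Cr ∩ F i ⁻¹' {y})} ⊆
            ⋃ p₀ : ℕ, {y | ∀ p, p₀ ≤ p → a ≤ v2 e p y} := by
          intro e y hy
          have h1 : μH[(M:ℝ)] (Cr ∩ F i ⁻¹' {y}) ≤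
              μH[(M:ℝ)] (⋃ p, Cs e p ∩ F i ⁻¹' {y}) := by
            apply measure_mono
            rw [← Set.iUnion_inter]
            exact Set.inter_subset_inter_left _ (hCsub e)
          rw [Directed.measure_iUnion
            (Monotone.directed_le fun p p' hpp' =>
              Set.inter_subset_inter_left _ (hCmono e hpp'))] at h1
          obtain ⟨p₀, hp₀⟩ := lt_iSup_iff.1 (lt_of_lt_of_le hy h1)
          refine Set.mem_iUnion.2 ⟨p₀, fun p hp => ?_⟩
          calc a ≤ μH[(M:ℝ)] (Cs e p₀ ∩ F i ⁻¹' {y}) := hp₀.le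
            _ ≤ μH[(M:ℝ)] (Cs e p ∩ F i ⁻¹' {y}) :=
                measure_mono (Set.inter_subset_inter_left _ (hCmono e hp))
            _ ≤ v2 e p y := hv2b e p y
        have hbound : ∀ e : ℕ, (volume : Measure ℝ)
            {y | a < μH[(M:ℝ)] (Cr ∩ F i ⁻¹' {y})} ≤
            ENNReal.ofReal (2*(1/((e:ℝ)+1))) * 2 / a := by
          intro e
          refine (measure_mono (hsub e)).trans ?_
          have hdir : Directed (· ⊆ ·) (fun p₀ : ℕ => {y | ∀ p, p₀ ≤ p → a ≤ v2 e p y}) :=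
            Monotone.directed_le fun p₀ p₀' h y hy p hp => hy p (h.trans hp)
          rw [Directed.measure_iUnion hdir]
          refine iSup_le fun p₀ => ?_
          have hss : {y | ∀ p, p₀ ≤ p → a ≤ v2 e p y} ⊆ {y | a ≤ v2 e p₀ y} :=
            fun y hy => hy p₀ le_rfl
          refine (measure_mono hss).trans ?_
          refine (meas_ge_le_lintegral_div (hv2m e p₀).aemeasurable ha0 hat).trans ?_
          exact ENNReal.div_le_div_right (hv2i e p₀) a
        have htend : Filter.Tendsto
            (fun e : ℕ => ENNReal.ofReal (2*(1/((e:ℝ)+1))) * 2 / a) atTop (𝓝 0) := by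
          have h1 : Filter.Tendsto (fun e : ℕ => ENNReal.ofReal (2*(1/((e:ℝ)+1))))
              atTop (𝓝 0) := by
            rw [show (0:ℝ≥0∞) = ENNReal.ofReal 0 by simp]
            apply ENNReal.tendsto_ofReal
            have : Filter.Tendsto (fun e : ℕ => 1/((e:ℝ)+1)) atTop (𝓝 0) := by
              exact tendsto_one_div_add_atTop_nhds_zero_nat
            simpa using this.const_mul 2
          have h2 := ENNReal.Tendsto.mul_const (b := (2:ℝ≥0∞)) h1 (Or.inr (by norm_num))
          rw [zero_mul] at h2
          have h3 := ENNReal.Tendsto.mul_const (b := a⁻¹) h2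
            (Or.inr (by simpa using ha0))
          rw [zero_mul] at h3
          simpa [div_eq_mul_inv] using h3
        refine le_antisymm ?_ (zero_le)
        exact ge_of_tendsto htend (Filter.Eventually.of_forall hbound)
    rw [ae_iff]
    simpa using key
  -- combine
  filter_upwards [ae1, aeZ, aeC] with y h1 h2 h3
  have hexp : ((M+1:ℕ):ℝ) - 1 = (M:ℝ) := by push_cast; ring
  constructor
  · -- rectifiability
    show IsHRectifiable M (Icc1 ∩ f ⁻¹' {y})
    set G : (ℕ × (Fin (M+1) → ℤ)) → Fin (M+1) → ℕ → Set (Fin (M+1) → ℝ) :=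
      fun i j k => {x | ∀ a : ℝ, |a - x j| ≤ 1/(k+1) →
        |a - x j|/(k+1) ≤ |F i (Function.update x j a) - F i x|} with hG
    have hg : ∀ iq : (ℕ × (Fin (M+1) → ℤ)) × Fin (M+1) × ℕ × (Fin (M+1) → ℤ),
        ∃ g : (Fin M → ℝ) → (Fin (M+1) → ℝ), (∃ K : ℝ≥0, LipschitzWith K g) ∧
          (G iq.1 iq.2.1 iq.2.2.1 ∩ dyCube iq.2.2.1 iq.2.2.2 ∩ F iq.1 ⁻¹' {y})
            ⊆ Set.range g := by
      rintro ⟨i, j, k, q'⟩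
      exact good_piece_cover (F i) i.1 k (hFlip i) j q' y
    choose g hgl hgc using hg
    obtain ⟨e2, he2⟩ := exists_surjective_nat
      ((ℕ × (Fin (M+1) → ℤ)) × Fin (M+1) × ℕ × (Fin (M+1) → ℤ))
    refine ⟨fun i => g (e2 i), fun i => hgl (e2 i), ?_⟩
    have hsub : (Icc1 ∩ f ⁻¹' {y}) \ (⋃ i, Set.range (g (e2 i))) ⊆
        ⋃ i : ℕ × (Fin (M+1) → ℤ),
          ((({x | ¬ DifferentiableAt ℝ (F i) x} ∩ Icc1) ∩ F i ⁻¹' {y}) ∪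
           (({x | DifferentiableAt ℝ (F i) x ∧ fderiv ℝ (F i) x = 0} ∩ Icc1)
             ∩ F i ⁻¹' {y})) := by
      rintro x ⟨⟨hxI, hxy⟩, hxr⟩
      simp only [Set.mem_preimage, Set.mem_singleton_iff] at hxy
      obtain ⟨n, hn⟩ := hAmem x hxI
      set i : ℕ × (Fin (M+1) → ℤ) := (n, fun l => ⌊2*(n+1)*x l⌋) with hi
      have hxP : x ∈ P i := ⟨hn, mem_dyCube n x⟩
      have hxF : F i x = y := by rw [← hFeq i hxP, hxy]
      refine Set.mem_iUnion.2 ⟨i, ?_⟩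
      by_cases hdiff : DifferentiableAt ℝ (F i) x
      · by_cases hD0 : fderiv ℝ (F i) x = 0
        · exact Or.inr ⟨⟨⟨hdiff, hD0⟩, hxI⟩, by simp [hxF]⟩
        · exfalso
          obtain ⟨j, k, hjk⟩ := good_of_deriv (F i) x hdiff hD0
          apply hxr
          have hxG : x ∈ G i j k ∩ dyCube k (fun l => ⌊2*(k+1)*x l⌋) ∩ F i ⁻¹' {y} :=
            ⟨⟨hjk, mem_dyCube k x⟩, by simp [hxF]⟩
          have := hgc (i, j, k, fun l => ⌊2*(k+1)*x l⌋) hxG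
          obtain ⟨ii, hii⟩ := he2 (i, j, k, fun l => ⌊2*(k+1)*x l⌋)
          exact Set.mem_iUnion.2 ⟨ii, by rw [hii]; exact this⟩
      · exact Or.inl ⟨⟨hdiff, hxI⟩, by simp [hxF]⟩
    refine le_antisymm ?_ (zero_le)
    calc μH[((M:ℕ):ℝ)] ((Icc1 ∩ f ⁻¹' {y}) \ ⋃ i, Set.range (g (e2 i)))
        ≤ μH[((M:ℕ):ℝ)] (⋃ i : ℕ × (Fin (M+1) → ℤ),
          ((({x | ¬ DifferentiableAt ℝ (F i) x} ∩ Icc1) ∩ F i ⁻¹' {y}) ∪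
           (({x | DifferentiableAt ℝ (F i) x ∧ fderiv ℝ (F i) x = 0} ∩ Icc1)
             ∩ F i ⁻¹' {y}))) := measure_mono hsub
      _ ≤ ∑' i : ℕ × (Fin (M+1) → ℤ), μH[((M:ℕ):ℝ)]
          ((({x | ¬ DifferentiableAt ℝ (F i) x} ∩ Icc1) ∩ F i ⁻¹' {y}) ∪
           (({x | DifferentiableAt ℝ (F i) x ∧ fderiv ℝ (F i) x = 0} ∩ Icc1)
             ∩ F i ⁻¹' {y})) := measure_iUnion_le _
      _ = 0 := by
          refine ENNReal.tsum_eq_zero.2 fun i => ?_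
          refine le_antisymm ((measure_union_le _ _).trans ?_) (zero_le)
          simp [h2 i, h3 i]
  · -- σ-finiteness
    obtain ⟨e1, he1⟩ := exists_surjective_nat (ℕ × (Fin (M+1) → ℤ))
    refine ⟨fun i => P (e1 i) ∩ f ⁻¹' {y}, ?_, ?_⟩
    · rintro x ⟨hxI, hxy⟩
      obtain ⟨n, hn⟩ := hAmem x hxI
      obtain ⟨ii, hii⟩ := he1 (n, fun l => ⌊2*(n+1)*x l⌋)
      refine Set.mem_iUnion.2 ⟨ii, ?_⟩
      rw [hii]
      exact ⟨⟨hn, mem_dyCube n x⟩, hxy⟩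
    · intro n
      rw [hexp]
      have hsub2 : P (e1 n) ∩ f ⁻¹' {y} ⊆ P (e1 n) ∩ F (e1 n) ⁻¹' {y} := by
        rintro x ⟨hxP, hxy⟩
        refine ⟨hxP, ?_⟩
        simp only [Set.mem_preimage, Set.mem_singleton_iff] at hxy ⊢
        rw [← hFeq (e1 n) hxP]
        exact hxy
      calc μH[(M:ℝ)] (P (e1 n) ∩ f ⁻¹' {y}) ≤ μH[(M:ℝ)] (P (e1 n) ∩ F (e1 n) ⁻¹' {y}) :=
            measure_mono hsub2
        _ ≤ v1 (e1 n) y := hv1b (e1 n) y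
        _ < ⊤ := h1 (e1 n)
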